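/- Let D > 0, α ∈ (0,1] and η > 1 be real numbers. If g > 0 satisfies g ≤ η·log( log(η·max(g/D, 1)) / (α·log η) ), then g ≤ η·log( (1/α)·( 1 + 2·log_η( max( η^{3/2}/(α·D·log η), 1 ) ) ) ). Consequently, the smallest constant boundary g_α making [1 + log_η(max(g/D, 1))]·e^{−g/η} ≤ α is bounded above by inf_{η>1} η·log( (1/α)·( 1 + 2·log_η( max( η^{3/2}/(α·D·log η), 1 ) ) ) ). -/

import Mathlib

open Real Set

noncomputable section

lemma log_le_div_e {x : ℝ} (hx : 0 < x) : Real.log x ≤ x / Real.exp 1 := by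
  have h := Real.log_le_sub_one_of_pos (show 0 < x / Real.exp 1 by positivity)
  rw [Real.log_div hx.ne' (Real.exp_pos 1).ne', Real.log_exp] at h
  linarith
lemma log_le_sqrt {x : ℝ} (hx : 0 < x) : Real.log x * Real.exp 1 ≤ 2 * Real.sqrt x := by
  have h1 : Real.log (Real.sqrt x) = Real.log x / 2 := Real.log_sqrt hx.le
  have h2 := log_le_div_e (Real.sqrt_pos.mpr hx)
  rw [h1, div_le_div_iff₀ (by norm_num) (Real.exp_pos 1)] at h2
  linarith
lemma e_mul_le_exp (x : ℝ) : Real.exp 1 * x ≤ Real.exp x := by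
  have h := Real.add_one_le_exp (x - 1)
  have h2 : Real.exp (x-1) * Real.exp 1 = Real.exp x := by
    rw [← Real.exp_add]; ring_nf
  nlinarith [Real.exp_pos 1, Real.exp_pos (x-1)]

-- purely polynomial core for case 2
lemma poly_core (α L e u v w g D X Y : ℝ)
    (hα0 : 0 < α) (hα1 : α ≤ 1) (hL : 0 < L) (he : (2.7:ℝ) < e)
    (hv0 : 0 < v) (hu0 : 0 < u) (hw0 : 0 < w)
    (hu2 : u^2 = g) (hv2 : v^2 = η') (hw2 : w^2 = D)
    (hX : 0 < X)
    (hYX : α * L * X ≤ Y)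
    (hexp : e^2 * g^2 ≤ 4 * (v^2)^2 * X)
    (hlog : Y * e * w ≤ 2 * (v * u))
    (hLe : L * e ≤ 2 * v)
    (hcase : α * L * D ≤ v^3) :
    (α * L) * w * u ≤ v^3 := by
  have he0 : (0:ℝ) < e := by linarith
  have hA : 0 < α * L := mul_pos hα0 hL
  have J : e^3 * (α*L) * w * u^3 ≤ 8 * v^5 := by
    have j2 : e^3*(α*L)*w*g^2 ≤ 8*(v^2)^2*(v*u) := by
      calc e^3*(α*L)*w*g^2 = ((α*L)*e*w)*(e^2*g^2) := by ring
        _ ≤ ((α*L)*e*w)*(4*(v^2)^2*X) := by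
            apply mul_le_mul_of_nonneg_left hexp (by positivity)
        _ = (4*(v^2)^2*e*w)*((α*L)*X) := by ring
        _ ≤ (4*(v^2)^2*e*w)*Y := by
            apply mul_le_mul_of_nonneg_left hYX (by positivity)
        _ = (4*(v^2)^2)*(Y*e*w) := by ring
        _ ≤ (4*(v^2)^2)*(2*(v*u)) := by
            apply mul_le_mul_of_nonneg_left hlog (by positivity)
        _ = 8*(v^2)^2*(v*u) := by ring
    rw [← hu2] at j2
    have j3 : (e^3*(α*L)*w*u^3) * u ≤ (8*v^5) * u := by nlinarith [j2]
    exact le_of_mul_le_mul_right j3 hu0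
  have k2 : 8 * (α*L) ≤ e^3 * v := by
    have hAe : (α*L) * e ≤ 2 * v := by nlinarith [mul_le_mul_of_nonneg_right hα1 hL.le]
    have he4 : (16:ℝ) ≤ e^4 := by nlinarith [sq_nonneg e, sq_nonneg (e^2 - 4)]
    have h5 : 8 * (α*L) * e ≤ (e^3 * v) * e := by nlinarith
    exact le_of_mul_le_mul_right h5 he0
  have k1 : (α*L) * ((α*L) * w * w) ≤ (α*L) * v^3 := by
    apply mul_le_mul_of_nonneg_left _ hA.le
    calc (α*L) * w * w = α * L * D := by rw [← hw2]; ring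
      _ ≤ v^3 := hcase
  have k3 : e^3 * ((α*L)*w*u)^3 ≤ e^3 * (v^3)^3 := by
    calc e^3 * ((α*L)*w*u)^3 = ((α*L)*((α*L)*w*w)) * (e^3*(α*L)*w*u^3) := by ring
      _ ≤ ((α*L)*v^3) * (8*v^5) := by
          apply mul_le_mul k1 J (by positivity) (by positivity)
      _ = (8*(α*L))*v^8 := by ring
      _ ≤ (e^3*v)*v^8 := by
          apply mul_le_mul_of_nonneg_right k2 (by positivity)
      _ = e^3*(v^3)^3 := by ring
  have h3 : ((α*L)*w*u)^3 ≤ (v^3)^3 := le_of_mul_le_mul_left k3 (by positivity)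
  exact (pow_le_pow_iff_left₀ (by positivity) (by positivity) (by norm_num)).mp h3

-- purely polynomial contradiction for case 1
lemma poly_contra (α L e v g D : ℝ)
    (hα0 : 0 < α) (hL : 0 < L) (he : (2.7182818283:ℝ) < e)
    (hv0 : 1 < v) (hD : 0 < D) (hgD : 1 < g / D)
    (hmaster : α * L * (e * g) ≤ (L + (g/D - 1)) * v^2)
    (hLe : L * e ≤ 2 * v)
    (hcase : v^3 ≤ α * L * D) : False := by
  have he0 : (0:ℝ) < e := by linarith
  have hg : D < g := by rw [lt_div_iff₀ hD] at hgD; linarith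
  -- multiply master by D
  have h1 : α * L * (e * g) * D ≤ ((L - 1) * D + g) * v^2 := by
    have h2 := mul_le_mul_of_nonneg_right hmaster hD.le
    have h3 : (L + (g/D - 1)) * v^2 * D = ((L-1)*D + g) * v^2 := by
      field_simp; ring
    rw [h3] at h2
    linarith [h2]
  -- v³ ≤ αLD so v³ e g ≤ αLD e g
  have h3 : v^3 * (e * g) ≤ ((L - 1) * D + g) * v^2 := by
    calc v^3 * (e*g) ≤ (α*L*D) * (e*g) := by
          apply mul_le_mul_of_nonneg_right hcase (mul_nonneg he0.le (by linarith))
      _ = α * L * (e*g) * D := by ring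
      _ ≤ ((L-1)*D + g) * v^2 := h1
  -- divide by v²
  have h4 : v * (e * g) ≤ (L - 1) * D + g := by
    have h5 : (v * (e*g)) * v^2 ≤ ((L-1)*D + g) * v^2 := by linear_combination h3
    exact le_of_mul_le_mul_right h5 (by positivity)
  -- L ≤ 2v/e, D < g, v > 1, e > 2.7 → contradiction
  -- v e g ≤ (L-1) D + g ≤ (2v/e) g - D + g < (2v/e) g + g
  have h6 : L * e * g ≤ 2 * v * g := mul_le_mul_of_nonneg_right hLe (by linarith)
  -- multiply h4 by e: v e² g ≤ (L e - e) D + e g ≤ 2vD - eD + eg < 2vg + eg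
  have h7 : v * e^2 * g ≤ (L*e - e) * D + e * g := by
    nlinarith [mul_le_mul_of_nonneg_right h4 he0.le]
  have h8 : L * e * D ≤ 2 * v * D := by nlinarith [hLe, hD]
  -- so v e² g ≤ 2vD + eg - eD ≤ 2vg + eg (since D<g... need 2vD ≤ 2vg)
  have h9 : v * e^2 * g ≤ 2*v*g + e*g - e*D := by
    nlinarith [h7, h8, mul_nonneg (by linarith : (0:ℝ) ≤ 2*v) (by linarith : (0:ℝ) ≤ g - D)]
  -- divide by g: v e² ≤ 2v + e - eD/g < 2v + e ≤ 2v + ev ⇒ e² ≤ 2 + e < e²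
  have hg0 : 0 < g := hD.trans hg
  have hvg : 0 < v * g := by positivity
  have hee : 2 + e < e^2 := by nlinarith
  have h10 : e * g ≤ e * v * g := by nlinarith [mul_nonneg (mul_nonneg he0.le hg0.le) (by linarith : (0:ℝ) ≤ v - 1)]
  nlinarith [h9, h10, hvg, mul_pos he0 hD, mul_le_mul_of_nonneg_right hee.le hvg.le]

set_option maxHeartbeats 2000000 in
lemma part1 (D α : ℝ) (hD : 0 < D) (hα0 : 0 < α) (hα1 : α ≤ 1)
    {η : ℝ} (hη : 1 < η) {g : ℝ} (hg : 0 < g)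
    (hyp : g ≤ η * Real.log (Real.log (η * max (g / D) 1) / (α * Real.log η))) :
    g ≤ η * Real.log ((1 / α) *
        (1 + 2 * Real.logb η (max (η ^ ((3 : ℝ) / 2) / (α * D * Real.log η)) 1))) := by
  have hη0 : (0:ℝ) < η := lt_trans one_pos hη
  have hL : 0 < Real.log η := Real.log_pos hη
  have hs1 : (1:ℝ) ≤ max (g/D) 1 := le_max_right _ _
  have hs0 : (0:ℝ) < max (g/D) 1 := lt_of_lt_of_le one_pos hs1
  have hηs : 1 < η * max (g/D) 1 := by nlinarith
  have hlogηs : 0 < Real.log (η * max (g/D) 1) := Real.log_pos hηs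
  have hX : 0 < Real.log (η * max (g/D) 1) / (α * Real.log η) := by positivity
  have h1 : g / η ≤ Real.log (Real.log (η * max (g/D) 1) / (α * Real.log η)) := by
    rw [div_le_iff₀ hη0]; linarith
  have h2 : Real.exp (g/η) ≤ Real.log (η * max (g/D) 1) / (α * Real.log η) := by
    calc Real.exp (g/η) ≤ Real.exp (Real.log (Real.log (η * max (g/D) 1) / (α * Real.log η))) :=
          Real.exp_le_exp.mpr h1
      _ = _ := Real.exp_log hX
  have I1 : α * Real.log η * Real.exp (g/η) ≤ Real.log (η * max (g/D) 1) := by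
    rw [le_div_iff₀ (by positivity)] at h2; linarith
  set M := max (η ^ ((3:ℝ)/2) / (α * D * Real.log η)) 1 with hMdef
  have hM1 : (1:ℝ) ≤ M := le_max_right _ _
  have hM0 : (0:ℝ) < M := lt_of_lt_of_le one_pos hM1
  -- main claim
  have hsM : max (g/D) 1 ≤ M^2 := by
    by_cases hc : g/D ≤ 1
    · rw [max_eq_right hc]; nlinarith
    · push_neg at hc
      have hsEq : max (g/D) 1 = g/D := max_eq_left hc.le
      rw [hsEq] at I1 ⊢
      have hv2 : (Real.sqrt η)^2 = η := Real.sq_sqrt hη0.le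
      have hv0 : 0 < Real.sqrt η := Real.sqrt_pos.mpr hη0
      have hv1 : 1 < Real.sqrt η := by nlinarith
      have hu2 : (Real.sqrt g)^2 = g := Real.sq_sqrt hg.le
      have hu0 : 0 < Real.sqrt g := Real.sqrt_pos.mpr hg
      have hw2 : (Real.sqrt D)^2 = D := Real.sq_sqrt hD.le
      have hw0 : 0 < Real.sqrt D := Real.sqrt_pos.mpr hD
      have hrp : η ^ ((3:ℝ)/2) = (Real.sqrt η)^3 := by
        rw [Real.sqrt_eq_rpow, ← Real.rpow_natCast (η ^ ((1:ℝ)/2)) 3,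
          ← Real.rpow_mul hη0.le]
        norm_num
      have he : (2.7182818283:ℝ) < Real.exp 1 := Real.exp_one_gt_d9
      have he0 : (0:ℝ) < Real.exp 1 := Real.exp_pos 1
      have hLe : Real.log η * Real.exp 1 ≤ 2 * Real.sqrt η := log_le_sqrt hη0
      rcases le_total (α * Real.log η * D) ((Real.sqrt η)^3) with hcase | hcase
      · -- main case via poly_core
        have hexp : (Real.exp 1)^2 * g^2 ≤ 4 * ((Real.sqrt η)^2)^2 * Real.exp (g/η) := by
          have p1 := e_mul_le_exp (g/(2*η))
          have p2 : Real.exp (g/(2*η)) * Real.exp (g/(2*η)) = Real.exp (g/η) := by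
            rw [← Real.exp_add]; congr 1; field_simp; ring
          have p3 : (0:ℝ) ≤ Real.exp 1 * (g/(2*η)) := by positivity
          have p4 := mul_le_mul p1 p1 p3 (Real.exp_pos (g/(2*η))).le
          rw [p2] at p4
          have p5 : (Real.exp 1 * (g/(2*η))) * (Real.exp 1 * (g/(2*η))) * (4*η^2)
              = (Real.exp 1)^2 * g^2 := by
            field_simp
            norm_num
          rw [hv2]
          nlinarith [mul_le_mul_of_nonneg_right p4 (by positivity : (0:ℝ) ≤ 4*η^2)]
        have hlogw : Real.log (η * (g/D)) * Real.exp 1 * Real.sqrt D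
            ≤ 2 * (Real.sqrt η * Real.sqrt g) := by
          have q1 : (0:ℝ) < η * (g/D) := by positivity
          have q2 := log_le_sqrt q1
          have q3 : Real.sqrt (η * (g/D)) = Real.sqrt η * (Real.sqrt g / Real.sqrt D) := by
            rw [Real.sqrt_mul hη0.le, Real.sqrt_div hg.le]
          rw [q3] at q2
          have q4 := mul_le_mul_of_nonneg_right q2 hw0.le
          have q5 : 2 * (Real.sqrt η * (Real.sqrt g / Real.sqrt D)) * Real.sqrt D
              = 2 * (Real.sqrt η * Real.sqrt g) := by field_simp
          rw [q5] at q4; exact q4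
        have key := poly_core α (Real.log η) (Real.exp 1) (Real.sqrt g) (Real.sqrt η)
          (Real.sqrt D) g D (Real.exp (g/η)) (Real.log (η * (g/D)))
          hα0 hα1 hL (by linarith) hv0 hu0 hw0 hu2 hv2 hw2 (Real.exp_pos _)
          I1 hexp hlogw hLe hcase
        -- key : α * log η * √D * √g ≤ (√η)^3
        have k5 : (α * Real.log η)^2 * D * g ≤ ((Real.sqrt η)^3)^2 := by
          have hsq := pow_le_pow_left₀ (by positivity : (0:ℝ) ≤ α * Real.log η * Real.sqrt D * Real.sqrt g) key 2
          have e1 : (α * Real.log η * Real.sqrt D * Real.sqrt g)^2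
              = (α * Real.log η)^2 * D * g := by
            rw [mul_pow, mul_pow, hw2, hu2]
          rw [e1] at hsq; exact hsq
        have hm0 : (0:ℝ) ≤ η ^ ((3:ℝ)/2) / (α * D * Real.log η) := by positivity
        have hmM : η ^ ((3:ℝ)/2) / (α * D * Real.log η) ≤ M := le_max_left _ _
        calc g/D ≤ (η ^ ((3:ℝ)/2) / (α * D * Real.log η))^2 := by
              rw [hrp, div_pow, div_le_div_iff₀ hD (by positivity)]
              nlinarith [k5, hD]
          _ ≤ M^2 := pow_le_pow_left₀ hm0 hmM 2
      · -- contradiction case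
        exfalso
        have t0 : Real.log (η * (g/D)) = Real.log η + Real.log (g/D) :=
          Real.log_mul hη0.ne' (by positivity)
        have t1 : Real.log (g/D) ≤ g/D - 1 := Real.log_le_sub_one_of_pos (by positivity)
        have t2 : α * Real.log η * (Real.exp 1 * (g/η)) ≤ Real.log η + (g/D - 1) := by
          have := mul_le_mul_of_nonneg_left (e_mul_le_exp (g/η)) (by positivity : (0:ℝ) ≤ α * Real.log η)
          rw [t0] at I1; linarith
        have t3 := mul_le_mul_of_nonneg_right t2 hη0.le
        have t4 : α * Real.log η * (Real.exp 1 * (g/η)) * η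
            = α * Real.log η * (Real.exp 1 * g) := by field_simp
        have t5 : (Real.log η + (g/D - 1)) * η = (Real.log η + (g/D - 1)) * (Real.sqrt η)^2 := by
          rw [hv2]
        rw [t4, t5] at t3
        exact poly_contra α (Real.log η) (Real.exp 1) (Real.sqrt η) g D
          hα0 hL he hv1 hD hc t3 hLe hcase
  -- Step B: conclude
  have hlogb : Real.logb η (max (g/D) 1) ≤ 2 * Real.logb η M := by
    calc Real.logb η (max (g/D) 1) ≤ Real.logb η (M^2) :=
          (Real.logb_le_logb hη hs0 (by positivity)).mpr hsM
      _ = 2 * Real.logb η M := by rw [Real.logb_pow]; norm_num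
  have hlogs : Real.log (η * max (g/D) 1)
      = Real.log η * (1 + Real.logb η (max (g/D) 1)) := by
    rw [Real.log_mul hη0.ne' hs0.ne', Real.logb]
    field_simp
  have hfin : Real.exp (g/η) ≤ (1/α) * (1 + 2 * Real.logb η M) := by
    rw [hlogs] at I1
    have h6 : α * Real.exp (g/η) ≤ 1 + Real.logb η (max (g/D) 1) := by
      nlinarith [I1, hL]
    have h7 : α * Real.exp (g/η) ≤ 1 + 2*Real.logb η M := by linarith
    rw [one_div, inv_mul_eq_div, le_div_iff₀ hα0]
    linarith [h7]
  have hR0 : 0 < (1/α) * (1 + 2 * Real.logb η M) :=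
    lt_of_lt_of_le (Real.exp_pos _) hfin
  have hfin2 : g/η ≤ Real.log ((1/α) * (1 + 2 * Real.logb η M)) := by
    calc g/η = Real.log (Real.exp (g/η)) := (Real.log_exp _).symm
      _ ≤ _ := (Real.log_le_log_iff (Real.exp_pos _) hR0).mpr hfin
  rw [div_le_iff₀ hη0] at hfin2
  linarith


set_option maxHeartbeats 1000000

/-- **Upper bound on the constant boundary `g_α` (eq. (3.6)).** For each `η > 1`: any `g > 0`
satisfying the implicit inequality is bounded by the explicit expression; consequently the
smallest constant boundary calibrating `[1 + log_η(max(g/D,1))]·e^{-g/η}` to level `α` is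
bounded above, and taking infima over `η > 1` on both sides gives the stated bound. -/
theorem const_boundary_upper_bound
    (D α : ℝ) (hD : 0 < D) (hα : α ∈ Set.Ioc (0 : ℝ) 1) :
    (∀ η : ℝ, 1 < η → ∀ g : ℝ, 0 < g →
      g ≤ η * Real.log (Real.log (η * max (g / D) 1) / (α * Real.log η)) →
      g ≤ η * Real.log ((1 / α) *
            (1 + 2 * Real.logb η (max (η ^ ((3 : ℝ) / 2) / (α * D * Real.log η)) 1)))) ∧
    (∀ η : ℝ, 1 < η →
      sInf {g : ℝ | 0 < g ∧
          (1 + Real.logb η (max (g / D) 1)) * Real.exp (-(g / η)) ≤ α}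
        ≤ η * Real.log ((1 / α) *
            (1 + 2 * Real.logb η (max (η ^ ((3 : ℝ) / 2) / (α * D * Real.log η)) 1)))) ∧
    (⨅ η : {x : ℝ // 1 < x},
        sInf {g : ℝ | 0 < g ∧
          (1 + Real.logb η (max (g / D) 1)) * Real.exp (-(g / (η : ℝ))) ≤ α})
      ≤ ⨅ η : {x : ℝ // 1 < x},
          (η : ℝ) * Real.log ((1 / α) *
            (1 + 2 * Real.logb η
              (max ((η : ℝ) ^ ((3 : ℝ) / 2) / (α * D * Real.log η)) 1))) := by
  obtain ⟨hα0, hα1⟩ := hα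
  have P1 : ∀ η : ℝ, 1 < η → ∀ g : ℝ, 0 < g →
      g ≤ η * Real.log (Real.log (η * max (g / D) 1) / (α * Real.log η)) →
      g ≤ η * Real.log ((1 / α) *
            (1 + 2 * Real.logb η (max (η ^ ((3 : ℝ) / 2) / (α * D * Real.log η)) 1))) :=
    fun η hη g hg hyp => part1 D α hD hα0 hα1 hη hg hyp
  have P2 : ∀ η : ℝ, 1 < η →
      sInf {g : ℝ | 0 < g ∧
          (1 + Real.logb η (max (g / D) 1)) * Real.exp (-(g / η)) ≤ α}
        ≤ η * Real.log ((1 / α) *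
            (1 + 2 * Real.logb η (max (η ^ ((3 : ℝ) / 2) / (α * D * Real.log η)) 1))) := by
    intro η hη
    have hη0 : (0:ℝ) < η := lt_trans one_pos hη
    have hL : 0 < Real.log η := Real.log_pos hη
    set B := η * Real.log ((1 / α) *
        (1 + 2 * Real.logb η (max (η ^ ((3 : ℝ) / 2) / (α * D * Real.log η)) 1))) with hBdef
    set S := {g : ℝ | 0 < g ∧
        (1 + Real.logb η (max (g / D) 1)) * Real.exp (-(g / η)) ≤ α} with hSdef
    have hBddS : BddBelow S := ⟨0, fun x hx => hx.1.le⟩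
    have hM1 : (1:ℝ) ≤ max (η ^ ((3:ℝ)/2) / (α * D * Real.log η)) 1 := le_max_right _ _
    have hB0 : 0 ≤ B := by
      apply mul_nonneg hη0.le
      apply Real.log_nonneg
      have h1 : (0:ℝ) ≤ Real.logb η (max (η ^ ((3:ℝ)/2) / (α * D * Real.log η)) 1) :=
        Real.logb_nonneg hη hM1
      have h2 : (1:ℝ) ≤ 1/α := by rw [le_div_iff₀ hα0]; linarith
      nlinarith
    by_contra hlt
    push_neg at hlt
    set g := (B + sInf S)/2 with hgdef
    have hBg : B < g := by
      rw [hgdef]; linarith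
    have hgInf : g < sInf S := by
      rw [hgdef]; linarith
    have hg0 : 0 < g := lt_of_le_of_lt hB0 hBg
    have hgS : g ∈ S := by
      by_contra hgS
      rw [hSdef, Set.mem_setOf_eq] at hgS
      push_neg at hgS
      have hcond := hgS hg0
      -- α < (1 + logb η s) * exp(-(g/η))
      have hs1 : (1:ℝ) ≤ max (g/D) 1 := le_max_right _ _
      have hs0 : (0:ℝ) < max (g/D) 1 := lt_of_lt_of_le one_pos hs1
      have hLs : (1:ℝ) ≤ 1 + Real.logb η (max (g/D) 1) := by
        have := Real.logb_nonneg hη hs1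
        linarith
      have hexp0 : 0 < Real.exp (g/η) := Real.exp_pos _
      have hstep : α * Real.exp (g/η) < 1 + Real.logb η (max (g/D) 1) := by
        rw [Real.exp_neg] at hcond
        have hinv : (Real.exp (g/η))⁻¹ * Real.exp (g/η) = 1 := inv_mul_cancel₀ hexp0.ne'
        nlinarith [mul_lt_mul_of_pos_right hcond hexp0, hinv]
      have hstep2 : Real.exp (g/η) < (1 + Real.logb η (max (g/D) 1))/α := by
        rw [lt_div_iff₀ hα0]; linarith
      have hLseq : Real.log (η * max (g/D) 1) / (α * Real.log η)
          = (1 + Real.logb η (max (g/D) 1))/α := by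
        have e0 : Real.log (η * max (g/D) 1)
            = Real.log η * (1 + Real.logb η (max (g/D) 1)) := by
          rw [Real.log_mul hη0.ne' hs0.ne', Real.logb]
          field_simp
        rw [e0, mul_comm α (Real.log η),
          mul_div_mul_left _ _ hL.ne']
      have hyp' : g ≤ η * Real.log (Real.log (η * max (g/D) 1) / (α * Real.log η)) := by
        have h3 : g/η < Real.log ((1 + Real.logb η (max (g/D) 1))/α) := by
          calc g/η = Real.log (Real.exp (g/η)) := (Real.log_exp _).symm
            _ < _ := Real.log_lt_log hexp0 hstep2
        rw [hLseq]
        rw [div_lt_iff₀ hη0] at h3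
        linarith
      have := P1 η hη g hg0 hyp'
      linarith
    have := csInf_le hBddS hgS
    linarith
  refine ⟨P1, P2, ?_⟩
  haveI : Nonempty {x : ℝ // 1 < x} := ⟨⟨2, one_lt_two⟩⟩
  apply ciInf_mono
  · refine ⟨0, ?_⟩
    rintro x ⟨η, rfl⟩
    exact Real.sInf_nonneg (fun y hy => hy.1.le)
  · intro η
    exact P2 η η.2

end
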